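/- Assume all cross-border units are distinct (k_1 < k_2 < ... < k_{n-1}). Define cluster probabilities φ_{2i} = a_i + b_i for i = 1,...,n-1 and φ_{2i-1} = 1 - b_{i-1} - a_i for i = 1,...,n (with b_0 = 0 and a_n = 0, where a_i = i - C_{k_i-1}, b_i = C_{k_i} - i). Then each φ_j ∈ [0,1] and ∑_{j=1}^{2n-1} φ_j = n. -/

import Mathlib

/-- under distinct cross-border units, the cluster probabilities
`φ_{2i} = a i + b i` (i = 1,…,n-1) and `φ_{2i-1} = 1 - b (i-1) - a i`
(i = 1,…,n, with `b 0 = 0`, `a n = 0`) all lie in `[0,1]` and sum to `n`. -/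
theorem cluster_probabilities_valid
    (N n : ℕ) (hN : 0 < N) (hn : 0 < n)
    (π : ℕ → ℝ)
    (hπpos : ∀ k ∈ Finset.Icc 1 N, 0 < π k)
    (hπle : ∀ k ∈ Finset.Icc 1 N, π k ≤ 1)
    (hsum : ∑ k ∈ Finset.Icc 1 N, π k = (n : ℝ))
    (C : ℕ → ℝ)
    (hC : ∀ k, C k = ∑ l ∈ Finset.Icc 1 k, π l)
    (K : ℕ → ℕ)
    (hK : ∀ i ∈ Finset.Icc 1 (n - 1),
      K i ∈ Finset.Icc 1 N ∧ C (K i - 1) < (i : ℝ) ∧ (i : ℝ) ≤ C (K i))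
    (hKmono : ∀ i ∈ Finset.Icc 1 (n - 1), ∀ j ∈ Finset.Icc 1 (n - 1),
      i < j → K i < K j)
    (a b : ℕ → ℝ)
    (ha : ∀ i ∈ Finset.Icc 1 (n - 1), a i = (i : ℝ) - C (K i - 1))
    (hb : ∀ i ∈ Finset.Icc 1 (n - 1), b i = C (K i) - (i : ℝ))
    (han : a n = 0) (hb0 : b 0 = 0)
    (φ : ℕ → ℝ)
    (hφeven : ∀ i ∈ Finset.Icc 1 (n - 1), φ (2 * i) = a i + b i)
    (hφodd : ∀ i ∈ Finset.Icc 1 n, φ (2 * i - 1) = 1 - b (i - 1) - a i) :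
    (∀ j ∈ Finset.Icc 1 (2 * n - 1), 0 ≤ φ j ∧ φ j ≤ 1) ∧
    ∑ j ∈ Finset.Icc 1 (2 * n - 1), φ j = (n : ℝ) := by
  -- monotonicity of C on [0, N]
  have hCmono : ∀ k m : ℕ, k ≤ m → m ≤ N → C k ≤ C m := by
    intro k m hkm hmN
    rw [hC, hC]
    apply Finset.sum_le_sum_of_subset_of_nonneg
    · exact Finset.Icc_subset_Icc_right hkm
    · intro l hl _
      have hl' := Finset.mem_Icc.mp hl
      exact (hπpos l (Finset.mem_Icc.mpr ⟨hl'.1, hl'.2.trans hmN⟩)).le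
  have hC0 : C 0 = 0 := by simp [hC]
  have hCN : C N = (n : ℝ) := by rw [hC]; exact hsum
  have hCstep : ∀ k : ℕ, 1 ≤ k → C k = C (k - 1) + π k := by
    intro k hk
    obtain ⟨m, rfl⟩ := Nat.exists_eq_add_of_le hk
    rw [hC, hC]
    have : 1 + m = m + 1 := by omega
    rw [this]
    simp only [Nat.add_sub_cancel]
    exact Finset.sum_Icc_succ_top (by omega) π
  -- basic facts about K, a, b on Icc 1 (n-1)
  have hKN : ∀ i ∈ Finset.Icc 1 (n - 1), 1 ≤ K i ∧ K i ≤ N := by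
    intro i hi
    have := (hK i hi).1
    exact Finset.mem_Icc.mp this
  have hanonneg : ∀ i ∈ Finset.Icc 1 (n - 1), 0 ≤ a i := by
    intro i hi
    rw [ha i hi]
    linarith [(hK i hi).2.1]
  have hbnonneg : ∀ i ∈ Finset.Icc 1 (n - 1), 0 ≤ b i := by
    intro i hi
    rw [hb i hi]
    linarith [(hK i hi).2.2]
  have habπ : ∀ i ∈ Finset.Icc 1 (n - 1), a i + b i = π (K i) := by
    intro i hi
    rw [ha i hi, hb i hi]
    have := hCstep (K i) (hKN i hi).1
    linarith
  -- bounds for the odd-indexed sums  b (i-1) + a i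
  have key : ∀ i ∈ Finset.Icc 1 n, 0 ≤ b (i - 1) + a i ∧ b (i - 1) + a i ≤ 1 := by
    intro i hi
    obtain ⟨hi1, hin⟩ := Finset.mem_Icc.mp hi
    by_cases h1 : i = 1
    · subst h1
      simp only [Nat.sub_self, hb0, zero_add]
      by_cases hn1 : n = 1
      · rw [← hn1, han]; norm_num
      · have h1m : (1 : ℕ) ∈ Finset.Icc 1 (n - 1) := Finset.mem_Icc.mpr ⟨le_refl _, by omega⟩
        rw [ha 1 h1m]
        have hlt := (hK 1 h1m).2.1
        have h0le : (0 : ℝ) ≤ C (K 1 - 1) := by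
          rw [← hC0]
          exact hCmono 0 (K 1 - 1) (by omega) (by have := (hKN 1 h1m).2; omega)
        push_cast at hlt ⊢
        constructor <;> linarith
    · -- i ≥ 2
      have hi2 : 2 ≤ i := by omega
      have hi1m : i - 1 ∈ Finset.Icc 1 (n - 1) := Finset.mem_Icc.mpr ⟨by omega, by omega⟩
      have hb1 : b (i - 1) = C (K (i - 1)) - ((i : ℝ) - 1) := by
        rw [hb _ hi1m]
        congr 1
        push_cast [Nat.cast_sub hi1]
        ring
      have hb1nn : 0 ≤ b (i - 1) := hbnonneg _ hi1m
      by_cases hin' : i = n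
      · subst hin'
        rw [han, add_zero]
        refine ⟨hb1nn, ?_⟩
        rw [hb1]
        have hle : C (K (i - 1)) ≤ C N := hCmono _ N (hKN _ hi1m).2 (le_refl _)
        rw [hCN] at hle
        have hii : ((i : ℝ) - 1) = ((i : ℝ) - 1) := rfl
        have : (i : ℝ) ≤ (i : ℝ) := le_refl _
        linarith
      · -- 2 ≤ i ≤ n-1
        have him : i ∈ Finset.Icc 1 (n - 1) := Finset.mem_Icc.mpr ⟨hi1, by omega⟩
        have hann : 0 ≤ a i := hanonneg i him
        refine ⟨by linarith, ?_⟩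
        rw [hb1, ha i him]
        -- need C (K (i-1)) ≤ C (K i - 1)
        have hKlt : K (i - 1) < K i := hKmono _ hi1m _ him (by omega)
        have hle : C (K (i - 1)) ≤ C (K i - 1) :=
          hCmono _ _ (by omega) (by have := (hKN i him).2; omega)
        have hb2 : (((i - 1 : ℕ) : ℝ)) = (i : ℝ) - 1 := by
          push_cast [Nat.cast_sub hi1]; ring
        linarith
  -- bounds for even-indexed values
  have keven : ∀ i ∈ Finset.Icc 1 (n - 1), 0 ≤ φ (2 * i) ∧ φ (2 * i) ≤ 1 := by
    intro i hi
    rw [hφeven i hi]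
    constructor
    · linarith [hanonneg i hi, hbnonneg i hi]
    · rw [habπ i hi]
      exact hπle _ (hK i hi).1
  constructor
  · -- boundedness
    intro j hj
    obtain ⟨hj1, hj2⟩ := Finset.mem_Icc.mp hj
    rcases Nat.even_or_odd j with ⟨i, hij⟩ | ⟨i, hij⟩
    · -- j = 2i even
      have hjj : j = 2 * i := by omega
      subst hjj
      exact keven i (Finset.mem_Icc.mpr ⟨by omega, by omega⟩)
    · -- j = 2i+1 odd, write j = 2*(i+1) - 1
      have hjj : j = 2 * (i + 1) - 1 := by omega
      subst hjj
      have him : i + 1 ∈ Finset.Icc 1 n := Finset.mem_Icc.mpr ⟨by omega, by omega⟩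
      rw [hφodd _ him]
      have := key _ him
      simp only [Nat.add_sub_cancel] at this ⊢
      constructor <;> linarith [this.1, this.2]
  · -- the sum
    have hset : Finset.Icc 1 (2 * n - 1) =
        (Finset.Icc 1 (n - 1)).image (fun i => 2 * i) ∪
        (Finset.Icc 1 n).image (fun i => 2 * i - 1) := by
      ext j
      simp only [Finset.mem_union, Finset.mem_image, Finset.mem_Icc]
      constructor
      · intro h
        rcases Nat.even_or_odd j with ⟨i, hij⟩ | ⟨i, hij⟩
        · exact Or.inl ⟨i, ⟨by omega, by omega⟩, by omega⟩
        · exact Or.inr ⟨i + 1, ⟨by omega, by omega⟩, by omega⟩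
      · rintro (⟨i, hi, rfl⟩ | ⟨i, hi, rfl⟩) <;> omega
    have hdisj : Disjoint ((Finset.Icc 1 (n - 1)).image (fun i => 2 * i))
        ((Finset.Icc 1 n).image (fun i => 2 * i - 1)) := by
      rw [Finset.disjoint_left]
      intro j hj1 hj2
      simp only [Finset.mem_image, Finset.mem_Icc] at hj1 hj2
      obtain ⟨i, hi, rfl⟩ := hj1
      obtain ⟨i', hi', he⟩ := hj2
      omega
    rw [hset, Finset.sum_union hdisj,
      Finset.sum_image (fun i _ j _ h => by omega),
      Finset.sum_image (s := Finset.Icc 1 n) (g := fun i => 2 * i - 1) (fun i hi j hj h => by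
        simp only [Finset.mem_coe, Finset.coe_Icc, Set.mem_Icc, Finset.mem_Icc] at hi hj h; omega)]
    have heq1 : ∑ i ∈ Finset.Icc 1 (n - 1), φ (2 * i) =
        ∑ i ∈ Finset.Icc 1 (n - 1), (a i + b i) :=
      Finset.sum_congr rfl (fun i hi => hφeven i hi)
    have heq2 : ∑ i ∈ Finset.Icc 1 n, φ (2 * i - 1) =
        ∑ i ∈ Finset.Icc 1 n, (1 - b (i - 1) - a i) :=
      Finset.sum_congr rfl (fun i hi => hφodd i hi)
    rw [heq1, heq2]
    have hIcc : Finset.Icc 1 n = insert n (Finset.Icc 1 (n - 1)) := by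
      ext j; simp only [Finset.mem_insert, Finset.mem_Icc]; omega
    have hnmem : n ∉ Finset.Icc 1 (n - 1) := by
      simp only [Finset.mem_Icc]; omega
    have hshift : ∑ i ∈ Finset.Icc 1 n, b (i - 1) =
        ∑ i ∈ Finset.Icc 0 (n - 1), b i :=
      Finset.sum_nbij' (fun i => i - 1) (fun i => i + 1)
        (fun i hi => by simp only [Finset.mem_Icc] at *; omega)
        (fun i hi => by simp only [Finset.mem_Icc] at *; omega)
        (fun i hi => by simp only [Finset.mem_Icc] at hi; show i - 1 + 1 = i; omega)
        (fun i hi => by simp only [Finset.mem_Icc] at hi; show i + 1 - 1 = i; omega)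
        (fun i _ => rfl)
    have hIcc0 : Finset.Icc 0 (n - 1) = insert 0 (Finset.Icc 1 (n - 1)) := by
      ext j; simp only [Finset.mem_insert, Finset.mem_Icc]; omega
    have h0mem : (0 : ℕ) ∉ Finset.Icc 1 (n - 1) := by
      simp only [Finset.mem_Icc]; omega
    have hsplit : ∑ i ∈ Finset.Icc 1 n, (1 - b (i - 1) - a i) =
        (n : ℝ) - (∑ i ∈ Finset.Icc 1 n, b (i - 1)) - ∑ i ∈ Finset.Icc 1 n, a i := by
      rw [Finset.sum_sub_distrib, Finset.sum_sub_distrib, Finset.sum_const,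
        Nat.card_Icc]
      simp
    have hlast : ∑ i ∈ Finset.Icc 1 n, a i = ∑ i ∈ Finset.Icc 1 (n - 1), a i := by
      rw [hIcc, Finset.sum_insert hnmem, han, zero_add]
    rw [hsplit, hshift, hIcc0, Finset.sum_insert h0mem, hb0, zero_add, hlast,
      Finset.sum_add_distrib]
    ring
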